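/- For every integer D ≥ 1 whose square is a sum of two integer squares, there exists a triangle with vertices in ℤ² all of whose side lengths are at least D, all of whose angles are at most π/2, and whose area is less than (√3·D² + 2√2·D)/4. -/

import Mathlib

noncomputable section

/-- Points of the Euclidean plane. -/
abbrev Pt := EuclideanSpace ℝ (Fin 2)

/-- The area of the triangle with vertices `p`, `q`, `r`. -/
def triArea (p q r : Pt) : ℝ :=
  |(q 0 - p 0) * (r 1 - p 1) - (q 1 - p 1) * (r 0 - p 0)| / 2

/-- A point of the plane belonging to the integer lattice `ℤ²`. -/
def IsLatticePt (p : Pt) : Prop := (∃ a : ℤ, p 0 = a) ∧ (∃ b : ℤ, p 1 = b)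

/-- For every integer `D ≥ 1` whose square is a sum of two integer squares, there exists a
triangle with vertices in `ℤ²`, all side lengths at least `D`, all angles at most `π/2`,
and area less than `(√3·D² + 2√2·D)/4`. -/
lemma aux2l : (1.41 : ℝ) ≤ Real.sqrt 2 := by
  nlinarith [Real.sq_sqrt (show (0:ℝ) ≤ 2 by norm_num), Real.sqrt_nonneg 2]

lemma aux2u : Real.sqrt 2 ≤ 1.42 := by
  nlinarith [Real.sq_sqrt (show (0:ℝ) ≤ 2 by norm_num), Real.sqrt_nonneg 2]

lemma aux3l : (1.73 : ℝ) ≤ Real.sqrt 3 := by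
  nlinarith [Real.sq_sqrt (show (0:ℝ) ≤ 3 by norm_num), Real.sqrt_nonneg 3]

lemma aux3u : Real.sqrt 3 ≤ 1.74 := by
  nlinarith [Real.sq_sqrt (show (0:ℝ) ≤ 3 by norm_num), Real.sqrt_nonneg 3]

lemma auxprod : (2.43 : ℝ) ≤ Real.sqrt 2 * Real.sqrt 3 := by
  nlinarith [mul_nonneg (show (0:ℝ) ≤ Real.sqrt 2 - 1.41 by linarith [aux2l])
    (show (0:ℝ) ≤ Real.sqrt 3 - 1.73 by linarith [aux3l]), aux2l, aux3l]

set_option maxHeartbeats 1000000 in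
theorem stmt0 (D : ℤ) (hD : 1 ≤ D) (hGauss : ∃ m n : ℤ, D ^ 2 = m ^ 2 + n ^ 2) :
    ∃ p q r : Pt, IsLatticePt p ∧ IsLatticePt q ∧ IsLatticePt r ∧
      (D : ℝ) ≤ dist p q ∧ (D : ℝ) ≤ dist q r ∧ (D : ℝ) ≤ dist p r ∧
      EuclideanGeometry.angle q p r ≤ Real.pi / 2 ∧
      EuclideanGeometry.angle p q r ≤ Real.pi / 2 ∧
      EuclideanGeometry.angle p r q ≤ Real.pi / 2 ∧
      triArea p q r < (Real.sqrt 3 * (D : ℝ) ^ 2 + 2 * Real.sqrt 2 * (D : ℝ)) / 4 := by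
  clear hGauss
  set x : ℤ := D / 2 with hxdef
  have hx1 : 2 * x ≤ D := by omega
  have hx2 : D ≤ 2 * x + 1 := by omega
  have hx0 : 0 ≤ x := by omega
  set N : ℤ := 3 * D ^ 2 + 2 * D - 1 with hNdef
  have hN4 : (4 : ℤ) ≤ N := by nlinarith
  have hNR : (4 : ℝ) ≤ (N : ℝ) := by exact_mod_cast hN4
  set h : ℤ := ⌈Real.sqrt N / 2⌉ with hhdef
  have hsq : Real.sqrt (N : ℝ) ^ 2 = (N : ℝ) := Real.sq_sqrt (by linarith)
  have hs0 : (0 : ℝ) ≤ Real.sqrt N := Real.sqrt_nonneg _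
  have hhl : Real.sqrt N / 2 ≤ (h : ℝ) := Int.le_ceil _
  have hhu : (h : ℝ) < Real.sqrt N / 2 + 1 := Int.ceil_lt_add_one _
  have hDR : (1 : ℝ) ≤ (D : ℝ) := by exact_mod_cast hD
  have hxR1 : 2 * (x : ℝ) ≤ (D : ℝ) := by exact_mod_cast hx1
  have hxR2 : (D : ℝ) ≤ 2 * (x : ℝ) + 1 := by exact_mod_cast hx2
  have hxR0 : (0 : ℝ) ≤ (x : ℝ) := by exact_mod_cast hx0
  have hNRdef : (N : ℝ) = 3 * (D : ℝ) ^ 2 + 2 * (D : ℝ) - 1 := by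
    rw [hNdef]; push_cast; ring
  have hhR0 : (0 : ℝ) ≤ (h : ℝ) := by linarith
  have h4h : (N : ℝ) ≤ 4 * (h : ℝ) ^ 2 := by
    nlinarith [sq_nonneg (2 * (h : ℝ) - Real.sqrt N)]
  refine ⟨(WithLp.equiv 2 (Fin 2 → ℝ)).symm ![0, 0],
          (WithLp.equiv 2 (Fin 2 → ℝ)).symm ![(D : ℝ), 0],
          (WithLp.equiv 2 (Fin 2 → ℝ)).symm ![(x : ℝ), (h : ℝ)],
          ⟨⟨0, by simp⟩, ⟨0, by simp⟩⟩, ⟨⟨D, by simp⟩, ⟨0, by simp⟩⟩,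
          ⟨⟨x, by simp⟩, ⟨h, by simp⟩⟩, ?_, ?_, ?_, ?_, ?_, ?_, ?_⟩
  · simp only [EuclideanSpace.dist_eq, WithLp.equiv_symm_apply, WithLp.ofLp_toLp, PiLp.toLp_apply, Fin.sum_univ_two,
      Matrix.cons_val_zero, Matrix.cons_val_one, Matrix.head_cons]
    rw [Real.le_sqrt (by linarith) (by positivity)]
    simp only [Real.dist_eq, sq_abs]
    nlinarith
  · simp only [EuclideanSpace.dist_eq, WithLp.equiv_symm_apply, WithLp.ofLp_toLp, PiLp.toLp_apply, Fin.sum_univ_two,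
      Matrix.cons_val_zero, Matrix.cons_val_one, Matrix.head_cons]
    rw [Real.le_sqrt (by linarith) (by positivity)]
    simp only [Real.dist_eq, sq_abs]
    nlinarith
  · simp only [EuclideanSpace.dist_eq, WithLp.equiv_symm_apply, WithLp.ofLp_toLp, PiLp.toLp_apply, Fin.sum_univ_two,
      Matrix.cons_val_zero, Matrix.cons_val_one, Matrix.head_cons]
    rw [Real.le_sqrt (by linarith) (by positivity)]
    simp only [Real.dist_eq, sq_abs]
    nlinarith
  · rw [EuclideanGeometry.angle, InnerProductGeometry.angle, Real.arccos_le_pi_div_two]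
    refine div_nonneg ?_ (by positivity)
    simp only [vsub_eq_sub, PiLp.inner_apply, RCLike.inner_apply, Fin.sum_univ_two,
      PiLp.sub_apply, WithLp.equiv_symm_apply, WithLp.ofLp_toLp, PiLp.toLp_apply, Matrix.cons_val_zero, Matrix.cons_val_one,
      Matrix.head_cons, conj_trivial]
    nlinarith
  · rw [EuclideanGeometry.angle, InnerProductGeometry.angle, Real.arccos_le_pi_div_two]
    refine div_nonneg ?_ (by positivity)
    simp only [vsub_eq_sub, PiLp.inner_apply, RCLike.inner_apply, Fin.sum_univ_two,
      PiLp.sub_apply, WithLp.equiv_symm_apply, WithLp.ofLp_toLp, PiLp.toLp_apply, Matrix.cons_val_zero, Matrix.cons_val_one,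
      Matrix.head_cons, conj_trivial]
    nlinarith
  · rw [EuclideanGeometry.angle, InnerProductGeometry.angle, Real.arccos_le_pi_div_two]
    refine div_nonneg ?_ (by positivity)
    simp only [vsub_eq_sub, PiLp.inner_apply, RCLike.inner_apply, Fin.sum_univ_two,
      PiLp.sub_apply, WithLp.equiv_symm_apply, WithLp.ofLp_toLp, PiLp.toLp_apply, Matrix.cons_val_zero, Matrix.cons_val_one,
      Matrix.head_cons, conj_trivial]
    nlinarith
  · have h2sq : Real.sqrt 2 ^ 2 = 2 := Real.sq_sqrt (by norm_num)
    have h3sq : Real.sqrt 3 ^ 2 = 3 := Real.sq_sqrt (by norm_num)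
    have h2n : (0:ℝ) ≤ Real.sqrt 2 := Real.sqrt_nonneg _
    have h3n : (0:ℝ) ≤ Real.sqrt 3 := Real.sqrt_nonneg _
    have h2l := aux2l
    have h3l := aux3l
    have h2u := aux2u
    have h3u := aux3u
    have hprod := auxprod
    have h3D : (0:ℝ) ≤ Real.sqrt 3 * (D : ℝ) := mul_nonneg h3n (by linarith)
    have hkey : Real.sqrt N < Real.sqrt 3 * (D : ℝ) + 2 * Real.sqrt 2 - 2 := by
      rw [Real.sqrt_lt' (by linarith)]
      nlinarith [mul_le_mul_of_nonneg_right
        (show (0.69:ℝ) ≤ Real.sqrt 2 * Real.sqrt 3 - Real.sqrt 3 by linarith)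
        (show (0:ℝ) ≤ (D:ℝ) by linarith)]
    simp only [triArea, WithLp.equiv_symm_apply, WithLp.ofLp_toLp, PiLp.toLp_apply, Matrix.cons_val_zero, Matrix.cons_val_one,
      Matrix.head_cons]
    rw [show ((D:ℝ) - 0) * ((h:ℝ) - 0) - (0 - 0) * ((x:ℝ) - 0) = (D:ℝ) * (h:ℝ) by ring,
      abs_of_nonneg (by positivity)]
    have h2h : 2 * (h : ℝ) < Real.sqrt 3 * (D : ℝ) + 2 * Real.sqrt 2 := by linarith
    nlinarith [mul_lt_mul_of_pos_left h2h (show (0:ℝ) < (D:ℝ) by linarith)]
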